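/- arXiv:0810.3695 — 2 statements merged into one kernel-verified Lean document; each statement's English description precedes it below -/
import Mathlib

section
/- Let k, l ∈ ℤ/pℤ with k + l ≠ 0, and let U be the permutation matrix on ℂ^(p^n) ⊗ ℂ^(p^n) defined on the standard basis by U|u,v⟩ = |u−v, (k+l)⁻¹(ku+lv)⟩. Then for every g ∈ G, U (ρ_k(g) ⊗ ρ_l(g)) U† = I_{p^n} ⊗ ρ_{k+l}(g), where I_{p^n} is the p^n × p^n identity matrix (the Clebsch–Gordan decomposition for k+l ≠ 0). -/
/-- Dot product of two vectors over `ZMod p`. -/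
def dot {p n : ℕ} (u v : Fin n → ZMod p) : ZMod p := ∑ i, u i * v i

/-- The underlying set of the Weyl–Heisenberg group: triples `(x, y, z)`. -/
@[ext] structure WH (p n : ℕ) where
  x : Fin n → ZMod p
  y : Fin n → ZMod p
  z : ZMod p

namespace WH

variable {p n : ℕ}

/-- Multiplication `(x,y,z)·(x',y',z') = (x+x', y+y', z+z'+x'·y)`. -/
def wmul (g h : WH p n) : WH p n := ⟨g.x + h.x, g.y + h.y, g.z + h.z + dot h.x g.y⟩

def wone : WH p n := ⟨0, 0, 0⟩

def winv (g : WH p n) : WH p n := ⟨-g.x, -g.y, dot g.x g.y - g.z⟩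

instance : Group (WH p n) where
  mul := wmul
  one := wone
  inv := winv
  mul_assoc g h k := by
    show wmul (wmul g h) k = wmul g (wmul h k)
    simp only [wmul, dot, mk.injEq, Pi.add_apply, mul_add, add_mul,
      Finset.sum_add_distrib]
    refine ⟨by abel, by abel, by ring⟩
  one_mul g := by
    show wmul wone g = g
    obtain ⟨x, y, z⟩ := g
    simp [wmul, wone, dot]
  mul_one g := by
    show wmul g wone = g
    obtain ⟨x, y, z⟩ := g
    simp [wmul, wone, dot]
  inv_mul_cancel g := by
    show wmul (winv g) g = wone
    obtain ⟨x, y, z⟩ := g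
    simp only [wmul, winv, wone, dot, mk.injEq, Pi.neg_apply, neg_mul]
    refine ⟨by abel, by abel, ?_⟩
    simp [Finset.sum_neg_distrib]

theorem mul_def (g h : WH p n) :
    g * h = ⟨g.x + h.x, g.y + h.y, g.z + h.z + dot h.x g.y⟩ := rfl

theorem one_def : (1 : WH p n) = ⟨0, 0, 0⟩ := rfl

end WH

/-- `S_H`: the pairs `(x,y)` occurring in `H`. -/
def SH {p n : ℕ} (H : Subgroup (WH p n)) : Set ((Fin n → ZMod p) × (Fin n → ZMod p)) :=
  {v | ∃ z : ZMod p, (⟨v.1, v.2, z⟩ : WH p n) ∈ H}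

/-- Symplectic inner product `⟨(x,y),(x',y')⟩ = x·y' - y·x'`. -/
def symp {p n : ℕ} (v w : (Fin n → ZMod p) × (Fin n → ZMod p)) : ZMod p :=
  dot v.1 w.2 - dot v.2 w.1

/-- Orthogonal complement under the symplectic inner product. -/
def sperp {p n : ℕ} (S : Set ((Fin n → ZMod p) × (Fin n → ZMod p))) :
    Set ((Fin n → ZMod p) × (Fin n → ZMod p)) :=
  {v | ∀ s ∈ S, symp v s = 0}

open Matrix Kronecker

/-- The primitive `p`-th root of unity `ω_p = e^(2πi/p)`. -/
noncomputable def omega (p : ℕ) : ℂ := Complex.exp (2 * Real.pi * Complex.I / p)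

/-- The `pⁿ`-dimensional representation
`ρ_k(x,y,z) = Σ_u ω_p^(k(z+y·u)) |u+x⟩⟨u|` of the Weyl–Heisenberg group,
written as a matrix indexed by the standard basis `{|u⟩ : u ∈ (ℤ/pℤ)ⁿ}`. -/
noncomputable def rho (p n : ℕ) (k : ZMod p) (g : WH p n) :
    Matrix (Fin n → ZMod p) (Fin n → ZMod p) ℂ :=
  fun a b => if a = b + g.x then omega p ^ (k * (g.z + dot g.y b)).val else 0
/-- The Clebsch–Gordan permutation matrix `U|u,v⟩ = |u−v, (k+l)⁻¹(ku+lv)⟩`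
for `k + l ≠ 0`. -/
def UCG (p n : ℕ) (k l : ZMod p) :
    Matrix ((Fin n → ZMod p) × (Fin n → ZMod p))
      ((Fin n → ZMod p) × (Fin n → ZMod p)) ℂ :=
  fun a uv => if a = (uv.1 - uv.2, (k + l)⁻¹ • (k • uv.1 + l • uv.2)) then 1 else 0


lemma omega_pow_add (p : ℕ) [Fact p.Prime] (x y : ZMod p) :
    omega p ^ (x + y).val = omega p ^ x.val * omega p ^ y.val := by
  have hp : p ≠ 0 := (Fact.out : p.Prime).ne_zero
  have : NeZero p := ⟨hp⟩
  have h1 : omega p ^ p = 1 := (Complex.isPrimitiveRoot_exp p hp).pow_eq_one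
  rw [← pow_add, ZMod.val_add]
  conv_rhs => rw [← Nat.div_add_mod (x.val + y.val) p]
  rw [pow_add, pow_mul, h1, one_pow, one_mul]

lemma dot_add_right {p n : ℕ} (u v w : Fin n → ZMod p) :
    dot u (v + w) = dot u v + dot u w := by
  simp [dot, mul_add, Finset.sum_add_distrib]

lemma dot_sub_right {p n : ℕ} (u v w : Fin n → ZMod p) :
    dot u (v - w) = dot u v - dot u w := by
  simp [dot, mul_sub, Finset.sum_sub_distrib]

lemma dot_smul_right {p n : ℕ} (c : ZMod p) (u v : Fin n → ZMod p) :
    dot u (c • v) = c * dot u v := by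
  simp [dot, Finset.mul_sum, mul_left_comm]

/-- Clebsch–Gordan decomposition for `k + l ≠ 0`:
`U (ρ_k(g) ⊗ ρ_l(g)) U† = I_{pⁿ} ⊗ ρ_{k+l}(g)`. -/
theorem clebsch_gordan_ne_zero (p n : ℕ) [Fact p.Prime] (hn : 1 ≤ n)
    (k l : ZMod p) (hkl : k + l ≠ 0) (g : WH p n) :
    UCG p n k l * (rho p n k g ⊗ₖ rho p n l g) * (UCG p n k l)ᴴ =
      (1 : Matrix (Fin n → ZMod p) (Fin n → ZMod p) ℂ) ⊗ₖ rho p n (k + l) g := by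
  have hm : (k + l)⁻¹ * (k + l) = 1 := inv_mul_cancel₀ hkl
  have hU : ∀ a c : (Fin n → ZMod p) × (Fin n → ZMod p),
      UCG p n k l a c =
        if c = (a.2 + (k + l)⁻¹ • l • a.1, a.2 - (k + l)⁻¹ • k • a.1) then 1 else 0 := by
    intro a c
    unfold UCG
    refine if_congr ?_ rfl rfl
    constructor
    · rintro rfl
      ext i <;>
        simp only [Pi.add_apply, Pi.sub_apply, Pi.smul_apply, smul_eq_mul]
      · linear_combination (-(c.1 i)) * hm
      · linear_combination (-(c.2 i)) * hm
    · rintro rfl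
      ext i <;>
        simp only [Pi.add_apply, Pi.sub_apply, Pi.smul_apply, smul_eq_mul]
      · linear_combination (-(a.1 i)) * hm
      · linear_combination (-(a.2 i)) * hm
  ext a b
  simp only [Matrix.mul_apply, Matrix.conjTranspose_apply, hU, apply_ite (star : ℂ → ℂ), star_one, star_zero,
    ite_mul, mul_ite, one_mul, zero_mul, mul_one, mul_zero,
    Finset.sum_ite_eq', Finset.mem_univ, if_true]
  simp only [Matrix.kroneckerMap_apply, Matrix.one_apply, rho]
  rw [ite_zero_mul_ite_zero]
  have hval : omega p ^ (k * (g.z + dot g.y (b.2 + (k + l)⁻¹ • l • b.1))).val *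
      omega p ^ (l * (g.z + dot g.y (b.2 - (k + l)⁻¹ • k • b.1))).val =
      omega p ^ ((k + l) * (g.z + dot g.y b.2)).val := by
    rw [← omega_pow_add]
    have key : k * (g.z + dot g.y (b.2 + (k + l)⁻¹ • l • b.1)) +
        l * (g.z + dot g.y (b.2 - (k + l)⁻¹ • k • b.1)) = (k + l) * (g.z + dot g.y b.2) := by
      simp only [dot_add_right, dot_sub_right, dot_smul_right]
      ring
    rw [key]
  have hiff : (a.2 + (k + l)⁻¹ • l • a.1 = b.2 + (k + l)⁻¹ • l • b.1 + g.x ∧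
      a.2 - (k + l)⁻¹ • k • a.1 = b.2 - (k + l)⁻¹ • k • b.1 + g.x) ↔
      (a.1 = b.1 ∧ a.2 = b.2 + g.x) := by
    constructor
    · rintro ⟨h1, h2⟩
      have hab : a.1 = b.1 := by
        funext i
        have e1 := congrFun h1 i
        have e2 := congrFun h2 i
        simp only [Pi.add_apply, Pi.sub_apply, Pi.smul_apply, smul_eq_mul] at e1 e2
        linear_combination e1 - e2 - (a.1 i - b.1 i) * hm
      refine ⟨hab, ?_⟩
      funext i
      have e1 := congrFun h1 i
      simp only [Pi.add_apply, Pi.sub_apply, Pi.smul_apply, smul_eq_mul] at e1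
      have e3 := congrFun hab i
      show a.2 i = b.2 i + g.x i
      linear_combination e1 - (k + l)⁻¹ * l * e3
    · rintro ⟨h1, h2⟩
      constructor
      · rw [h1, h2]; abel
      · rw [h1, h2]; abel
  simp only [hval, hiff, ite_zero_mul_ite_zero, one_mul]
end

section
/- Let p be an odd prime and l a nonzero element of ℤ/pℤ. Define U on ℂ^(p^n) ⊗ ℂ^(p^n) by U|u,v⟩ = p^(−n/2) Σ_{w ∈ (ℤ/pℤ)^n} ω_p^((l·2⁻¹)·((u+v)·w)) |u−v, w⟩, where 2⁻¹ is the inverse of 2 in ℤ/pℤ. Then U is unitary, and for every g = (x,y,z) ∈ G, the matrix U (ρ_{−l}(g) ⊗ ρ_l(g)) U† is diagonal with diagonal entry ω_p^(l(w·x − s·y)) at the basis index (s,w); in particular each diagonal entry is independent of z (the Clebsch–Gordan decomposition into one-dimensional irreducibles for k+l = 0). -/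
open Matrix Kronecker

/-- The Clebsch–Gordan transform
`U|u,v⟩ = p^(−n/2) Σ_w ω_p^((l·2⁻¹)((u+v)·w)) |u−v, w⟩` for `k + l = 0`. -/
noncomputable def UCG0 (p n : ℕ) (l : ZMod p) :
    Matrix ((Fin n → ZMod p) × (Fin n → ZMod p))
      ((Fin n → ZMod p) × (Fin n → ZMod p)) ℂ :=
  fun sw uv =>
    if sw.1 = uv.1 - uv.2 then
      (1 / Real.sqrt (p ^ n) : ℝ) *
        omega p ^ (l * 2⁻¹ * dot (uv.1 + uv.2) sw.2).val
    else 0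

noncomputable def E (p : ℕ) (a : ZMod p) : ℂ := omega p ^ a.val

section helper
variable (p : ℕ) [Fact p.Prime]

lemma omega_pow_p : omega p ^ p = 1 := by
  have hp : (p:ℂ) ≠ 0 := Nat.cast_ne_zero.2 (Fact.out : p.Prime).ne_zero
  rw [omega, ← Complex.exp_nat_mul, mul_div_cancel₀ _ hp, Complex.exp_two_pi_mul_I]

lemma omega_pow_mod (m : ℕ) : omega p ^ m = omega p ^ (m % p) := by
  conv_lhs => rw [← Nat.div_add_mod m p]
  rw [pow_add, pow_mul, omega_pow_p, one_pow, one_mul]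

variable {p}

lemma E_add (a b : ZMod p) : E p (a + b) = E p a * E p b := by
  have : NeZero p := ⟨(Fact.out : p.Prime).ne_zero⟩
  rw [E, ZMod.val_add, ← omega_pow_mod, pow_add]; rfl

lemma E_zero : E p 0 = 1 := by
  have : NeZero p := ⟨(Fact.out : p.Prime).ne_zero⟩
  simp [E]

lemma E_zero' (h : a = (0 : ZMod p)) : E p a = 1 := h ▸ E_zero

lemma E_mul_E_neg (a : ZMod p) : E p a * E p (-a) = 1 := by
  rw [← E_add, add_neg_cancel, E_zero]

lemma conj_E (a : ZMod p) : (starRingEnd ℂ) (E p a) = E p (-a) := by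
  have habs : ‖E p a‖ = 1 := by
    rw [E, norm_pow, omega, Complex.norm_exp]
    norm_num
  have : (E p a)⁻¹ = (starRingEnd ℂ) (E p a) := Complex.inv_eq_conj habs
  rw [← this]
  exact (eq_inv_of_mul_eq_one_left (by rw [mul_comm]; exact E_mul_E_neg a)).symm

lemma sum_E : ∑ t : ZMod p, E p t = 0 := by
  have hp1 : 1 < p := (Fact.out : p.Prime).one_lt
  have : NeZero p := ⟨(Fact.out : p.Prime).ne_zero⟩
  have hprim : IsPrimitiveRoot (omega p) p := by
    rw [omega]; exact Complex.isPrimitiveRoot_exp p (Fact.out : p.Prime).ne_zero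
  have := hprim.geom_sum_eq_zero hp1
  rw [← this]
  refine Finset.sum_nbij' (fun t => t.val) (fun i => (i : ZMod p)) ?_ ?_ ?_ ?_ ?_
  · intro t _; exact Finset.mem_range.2 (ZMod.val_lt t)
  · intro i _; exact Finset.mem_univ _
  · intro t _; simp [ZMod.natCast_val, ZMod.cast_id]
  · intro i hi; exact ZMod.val_cast_of_lt (Finset.mem_range.1 hi)
  · intro t _; rfl

lemma sum_E_mul (a : ZMod p) : ∑ t : ZMod p, E p (a * t) = if a = 0 then (p:ℂ) else 0 := by
  have : NeZero p := ⟨(Fact.out : p.Prime).ne_zero⟩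
  split_ifs with h
  · rw [h]
    simp only [zero_mul]
    rw [Finset.sum_congr rfl (fun t _ => E_zero (p := p))]
    simp [ZMod.card]
  · rw [← sum_E (p := p)]
    exact Fintype.sum_equiv (Equiv.mulLeft₀ a h) _ _ (fun t => rfl)
end helper

section helper2
variable {p : ℕ} [Fact p.Prime] {n : ℕ}

lemma E_sum {ι : Type*} (s : Finset ι) (f : ι → ZMod p) :
    E p (∑ i ∈ s, f i) = ∏ i ∈ s, E p (f i) := by
  classical
  induction s using Finset.cons_induction with
  | empty => simp [E_zero (p := p)]
  | cons a s ha ih => rw [Finset.sum_cons, Finset.prod_cons, E_add, ih]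

lemma sum_E_dot (a : Fin n → ZMod p) :
    ∑ v : Fin n → ZMod p, E p (dot a v) = if a = 0 then ((p:ℂ))^n else 0 := by
  have key : ∑ v : Fin n → ZMod p, E p (dot a v)
      = ∏ i : Fin n, ∑ t : ZMod p, E p (a i * t) := by
    rw [Finset.prod_univ_sum]
    rw [← Fintype.piFinset_univ]
    exact Finset.sum_congr rfl fun v _ => E_sum _ _
  rw [key]
  split_ifs with h
  · subst h; simp [sum_E_mul (p := p), E_zero (p := p)]
  · obtain ⟨i, hi⟩ := Function.ne_iff.1 h
    refine Finset.prod_eq_zero (Finset.mem_univ i) ?_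
    rw [sum_E_mul, if_neg (by simpa using hi)]
end helper2

section dotlemmas
variable {p n : ℕ}

lemma dot_comm (u v : Fin n → ZMod p) : dot u v = dot v u := by
  simp [dot, mul_comm]

lemma dot_add_left (a b v : Fin n → ZMod p) : dot (a + b) v = dot a v + dot b v := by
  simp [dot, add_mul, Finset.sum_add_distrib]

lemma dot_sub_left (a b v : Fin n → ZMod p) : dot (a - b) v = dot a v - dot b v := by
  simp [dot, sub_mul, Finset.sum_sub_distrib]

lemma dot_lsmul_sub (c : ZMod p) (w w' v : Fin n → ZMod p) :
    dot (fun i => c * (w i - w' i)) v = c * (dot w v - dot w' v) := by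
  simp only [dot, Finset.mul_sum, ← Finset.sum_sub_distrib]
  exact Finset.sum_congr rfl fun i _ => by ring
end dotlemmas

section main
variable (p n : ℕ) [Fact p.Prime]

lemma wh_two_ne_zero (hp : p ≠ 2) : (2 : ZMod p) ≠ 0 := by
  have : NeZero p := ⟨(Fact.out : p.Prime).ne_zero⟩
  intro h
  rw [show (2 : ZMod p) = ((2:ℕ) : ZMod p) by push_cast; ring,
    ZMod.natCast_eq_zero_iff] at h
  exact hp ((Nat.prime_dvd_prime_iff_eq (Fact.out : p.Prime) Nat.prime_two).1 h)

lemma UCG0_apply (l : ZMod p) (s w u v : Fin n → ZMod p) :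
    UCG0 p n l (s, w) (u, v) =
      if s = u - v then ((1 / Real.sqrt (p ^ n) : ℝ) : ℂ) * E p (l * 2⁻¹ * dot (u + v) w)
      else 0 := rfl

lemma key1 (hp : p ≠ 2) (l : ZMod p) (hl : l ≠ 0) :
    UCG0 p n l * (UCG0 p n l)ᴴ = 1 := by
  have h2 : (2 : ZMod p)⁻¹ * 2 = 1 := inv_mul_cancel₀ (wh_two_ne_zero p hp)
  have hpn : ((p:ℂ))^n ≠ 0 := pow_ne_zero _ (Nat.cast_ne_zero.2 (Fact.out : p.Prime).ne_zero)
  set c : ℂ := ((1 / Real.sqrt (p ^ n) : ℝ) : ℂ) with hc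
  have hcc : c * c * (p:ℂ)^n = 1 := by
    rw [hc, ← Complex.ofReal_mul,
      show (1 / Real.sqrt (p^n)) * (1 / Real.sqrt (p^n)) = 1 / (p^n : ℝ) by
        rw [div_mul_div_comm, one_mul, Real.mul_self_sqrt (by positivity)]]
    push_cast
    field_simp
  ext ⟨s, w⟩ ⟨s', w'⟩
  rw [Matrix.mul_apply, Fintype.sum_prod_type]
  simp only [Matrix.conjTranspose_apply, UCG0_apply, eq_sub_iff_add_eq]
  rw [Finset.sum_comm]
  simp only [apply_ite star, star_zero, ite_mul, mul_ite, zero_mul, mul_zero,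
    Finset.sum_ite_eq, Finset.mem_univ, if_true]
  simp only [add_left_inj]
  by_cases hss : s = s'
  · subst hss
    simp only [if_true]
    have hterm : ∀ x : Fin n → ZMod p,
        (c * E p (l * 2⁻¹ * dot (s + x + x) w) * star (c * E p (l * 2⁻¹ * dot (s + x + x) w')))
        = (c * c) * (E p (l * 2⁻¹ * dot s w - l * 2⁻¹ * dot s w')
            * E p (dot (fun i => l * (w i - w' i)) x)) := by
      intro x
      rw [star_mul', Complex.star_def, Complex.conj_ofReal, conj_E]
      have harg : l * 2⁻¹ * dot (s + x + x) w + -(l * 2⁻¹ * dot (s + x + x) w')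
          = (l * 2⁻¹ * dot s w - l * 2⁻¹ * dot s w') + dot (fun i => l * (w i - w' i)) x := by
        simp only [dot_add_left, dot_lsmul_sub]
        rw [dot_comm w x, dot_comm w' x]
        linear_combination (l * (dot x w) - l * (dot x w')) * h2
      calc c * E p (l * 2⁻¹ * dot (s + x + x) w) * (c * E p (-(l * 2⁻¹ * dot (s + x + x) w')))
          = (c * c) * (E p (l * 2⁻¹ * dot (s + x + x) w) * E p (-(l * 2⁻¹ * dot (s + x + x) w'))) := by ring
        _ = (c * c) * E p (l * 2⁻¹ * dot (s + x + x) w + -(l * 2⁻¹ * dot (s + x + x) w')) := by rw [E_add]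
        _ = _ := by rw [harg, E_add]
    rw [Finset.sum_congr rfl (fun x _ => hterm x)]
    rw [← Finset.mul_sum, ← Finset.mul_sum, sum_E_dot]
    by_cases hww : w = w'
    · subst hww
      have hb : (fun i => l * (w i - w i)) = (0 : Fin n → ZMod p) := by
        funext i; simp
      rw [if_pos hb, sub_self, E_zero]
      simp only [Matrix.one_apply, Prod.mk.injEq, true_and, if_pos rfl]
      calc c * c * (1 * (p:ℂ)^n) = c * c * (p:ℂ)^n := by ring
        _ = 1 := hcc
    · have hb : (fun i => l * (w i - w' i)) ≠ (0 : Fin n → ZMod p) := by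
        obtain ⟨i, hi⟩ := Function.ne_iff.1 hww
        intro h
        have := congrFun h i
        simp only [Pi.zero_apply, mul_eq_zero, sub_eq_zero] at this
        tauto
      rw [if_neg hb]
      simp [Matrix.one_apply, Prod.ext_iff, hww]
  · simp [hss, Matrix.one_apply, Prod.ext_iff]

lemma key2 (hp : p ≠ 2) (l : ZMod p) (hl : l ≠ 0) (g : WH p n) :
    UCG0 p n l * (rho p n (-l) g ⊗ₖ rho p n l g) =
      Matrix.diagonal
        (fun sw : (Fin n → ZMod p) × (Fin n → ZMod p) =>
          E p (l * (dot sw.2 g.x - dot sw.1 g.y))) * UCG0 p n l := by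
  have h2 : (2 : ZMod p)⁻¹ * 2 = 1 := inv_mul_cancel₀ (wh_two_ne_zero p hp)
  set c : ℂ := ((1 / Real.sqrt (p ^ n) : ℝ) : ℂ) with hc
  ext ⟨s, w⟩ ⟨u', v'⟩
  rw [Matrix.mul_apply, Fintype.sum_prod_type]
  simp only [Matrix.kroneckerMap_apply, rho, UCG0_apply,
    show ∀ a : ZMod p, omega p ^ a.val = E p a from fun _ => rfl]
  simp only [mul_ite, ite_mul, mul_zero, zero_mul, Finset.sum_ite_eq,
    Finset.sum_ite_eq', Finset.mem_univ, if_true]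
  rw [Matrix.diagonal_mul]
  simp only [UCG0_apply, add_sub_add_right_eq_sub]
  by_cases hs : s = u' - v'
  · rw [if_pos hs, if_pos hs]
    have harg : l * 2⁻¹ * dot (u' + g.x + (v' + g.x)) w + (-l * (g.z + dot g.y u'))
        + l * (g.z + dot g.y v')
        = l * (dot w g.x - dot s g.y) + l * 2⁻¹ * dot (u' + v') w := by
      subst hs
      simp only [dot_add_left, dot_sub_left]
      rw [dot_comm w g.x, dot_comm u' g.y, dot_comm v' g.y]
      linear_combination (l * dot g.x w) * h2
    calc c * E p (l * 2⁻¹ * dot (u' + g.x + (v' + g.x)) w) * (E p (-l * (g.z + dot g.y u'))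
          * E p (l * (g.z + dot g.y v')))
        = c * E p (l * 2⁻¹ * dot (u' + g.x + (v' + g.x)) w + (-l * (g.z + dot g.y u'))
            + l * (g.z + dot g.y v')) := by rw [E_add, E_add]; ring
      _ = c * E p (l * (dot w g.x - dot s g.y) + l * 2⁻¹ * dot (u' + v') w) := by rw [harg]
      _ = E p (l * (dot w g.x - dot s g.y)) * (c * E p (l * 2⁻¹ * dot (u' + v') w)) := by
          rw [E_add]; ring
  · rw [if_neg hs, if_neg hs, mul_zero]

end main
/-- Clebsch–Gordan decomposition into one-dimensional irreducibles for `k + l = 0`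
(`p` odd, `l ≠ 0`): `U` is unitary, and `U (ρ_{−l}(g) ⊗ ρ_l(g)) U†` is diagonal with
entry `ω_p^(l(w·x − s·y))` at basis index `(s,w)`; in particular the diagonal entries
do not depend on `z`. -/
theorem clebsch_gordan_zero (p n : ℕ) [Fact p.Prime] (hp : p ≠ 2) (hn : 1 ≤ n)
    (l : ZMod p) (hl : l ≠ 0) :
    (UCG0 p n l * (UCG0 p n l)ᴴ = 1 ∧ (UCG0 p n l)ᴴ * UCG0 p n l = 1) ∧
      ∀ g : WH p n,
        UCG0 p n l * (rho p n (-l) g ⊗ₖ rho p n l g) * (UCG0 p n l)ᴴ =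
          Matrix.diagonal
            (fun sw : (Fin n → ZMod p) × (Fin n → ZMod p) =>
              omega p ^ (l * (dot sw.2 g.x - dot sw.1 g.y)).val) := by
  
  have h1 : UCG0 p n l * (UCG0 p n l)ᴴ = 1 := key1 p n hp l hl
  refine ⟨⟨h1, mul_eq_one_comm.1 h1⟩, fun g => ?_⟩
  calc UCG0 p n l * (rho p n (-l) g ⊗ₖ rho p n l g) * (UCG0 p n l)ᴴ
      = (Matrix.diagonal _ * UCG0 p n l) * (UCG0 p n l)ᴴ := by rw [key2 p n hp l hl g]
    _ = Matrix.diagonal _ * (UCG0 p n l * (UCG0 p n l)ᴴ) := by rw [Matrix.mul_assoc]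
    _ = _ := by rw [h1, Matrix.mul_one]; rfl
end
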